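/- Let B = γI + UΓUᵀ with γ > 0, U ∈ R^{d×m}, Γ ∈ R^{m×m} symmetric, and let s, y ∈ R^d with yᵀs ≠ 0. Define ρ = 1/(yᵀs), V = I − ρ s yᵀ, p = Γ Uᵀ s, τ = sᵀUΓUᵀs, δ = τ + γ sᵀs. Then Vᵀ B V + ρ y yᵀ = γ I + U⁺ Γ⁺ (U⁺)ᵀ, where U⁺ = [U, s, y] ∈ R^{d×(m+2)} and Γ⁺ is the (m+2)×(m+2) block matrix with blocks: Γ⁺[1:m,1:m] = Γ, Γ⁺[1:m, m+2] = Γ⁺[m+2, 1:m]ᵀ = −ρ p, Γ⁺[m+1, m+2] = Γ⁺[m+2, m+1] = −γρ, Γ⁺[m+2, m+2] = ρ(1 + ρδ), and Γ⁺[1:m, m+1] = 0, Γ⁺[m+1, m+1] = 0. -/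

import Mathlib

open Matrix

private lemma vv_mul_mat {n k l : Type*} [Fintype k] (a : n → ℝ) (b : k → ℝ)
    (M : Matrix k l ℝ) : vecMulVec a b * M = vecMulVec a (b ᵥ* M) := by
  ext i j
  simp [Matrix.mul_apply, Matrix.vecMulVec_apply, Matrix.vecMul, dotProduct,
    Finset.mul_sum, mul_assoc]

private lemma mat_mul_vv {n k l : Type*} [Fintype k] (M : Matrix n k ℝ)
    (a : k → ℝ) (b : l → ℝ) : M * vecMulVec a b = vecMulVec (M *ᵥ a) b := by
  ext i j
  simp [Matrix.mul_apply, Matrix.vecMulVec_apply, Matrix.mulVec, dotProduct,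
    Finset.sum_mul, mul_assoc]

private lemma vv_mul_vv {n k l : Type*} [Fintype k] (a : n → ℝ) (b c : k → ℝ)
    (e : l → ℝ) : vecMulVec a b * vecMulVec c e = (b ⬝ᵥ c) • vecMulVec a e := by
  ext i j
  simp only [Matrix.mul_apply, Matrix.vecMulVec_apply, dotProduct,
    Matrix.smul_apply, smul_eq_mul, Finset.sum_mul]
  exact Finset.sum_congr rfl fun x _ => by ring

private lemma vv_transpose {n l : Type*} (a : n → ℝ) (b : l → ℝ) :
    (vecMulVec a b)ᵀ = vecMulVec b a := by
  ext i j; simp [Matrix.vecMulVec_apply, mul_comm]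

private lemma vv_add_left {n l : Type*} (a a' : n → ℝ) (b : l → ℝ) :
    vecMulVec (a + a') b = vecMulVec a b + vecMulVec a' b := by
  ext i j; simp [Matrix.vecMulVec_apply, add_mul]

private lemma vv_add_right {n l : Type*} (a : n → ℝ) (b b' : l → ℝ) :
    vecMulVec a (b + b') = vecMulVec a b + vecMulVec a b' := by
  ext i j; simp [Matrix.vecMulVec_apply, mul_add]

private lemma vv_smul_left {n l : Type*} (r : ℝ) (a : n → ℝ) (b : l → ℝ) :
    vecMulVec (r • a) b = r • vecMulVec a b := by
  ext i j; simp [Matrix.vecMulVec_apply, mul_assoc]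

private lemma vv_smul_right {n l : Type*} (r : ℝ) (a : n → ℝ) (b : l → ℝ) :
    vecMulVec a (r • b) = r • vecMulVec a b := by
  ext i j; simp [Matrix.vecMulVec_apply]; ring

private lemma vv_mulVec {n k : Type*} [Fintype k] (a : n → ℝ) (b c : k → ℝ) :
    vecMulVec a b *ᵥ c = (b ⬝ᵥ c) • a := by
  ext i
  simp only [Matrix.mulVec, dotProduct, Matrix.vecMulVec_apply, Pi.smul_apply,
    smul_eq_mul, Finset.sum_mul]
  exact Finset.sum_congr rfl fun x _ => by ring

private lemma vv_zero_left {n l : Type*} (b : l → ℝ) :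
    vecMulVec (0 : n → ℝ) b = 0 := by ext i j; simp [Matrix.vecMulVec_apply]

private lemma vv_zero_right {n l : Type*} (a : n → ℝ) :
    vecMulVec a (0 : l → ℝ) = 0 := by ext i j; simp [Matrix.vecMulVec_apply]

private def ee0 : Fin 2 → ℝ := fun j => if j = 0 then 1 else 0
private def ee1 : Fin 2 → ℝ := fun j => if j = 0 then 0 else 1

private lemma ee00 : ee0 ⬝ᵥ ee0 = 1 := by simp [dotProduct, Fin.sum_univ_two, ee0]
private lemma ee01 : ee0 ⬝ᵥ ee1 = 0 := by simp [dotProduct, Fin.sum_univ_two, ee0, ee1]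
private lemma ee10 : ee1 ⬝ᵥ ee0 = 0 := by simp [dotProduct, Fin.sum_univ_two, ee0, ee1]
private lemma ee11 : ee1 ⬝ᵥ ee1 = 1 := by simp [dotProduct, Fin.sum_univ_two, ee1]

theorem dfp_compact_inductive_step
    {d m : ℕ} (γ : ℝ) (hγ : 0 < γ)
    (U : Matrix (Fin d) (Fin m) ℝ) (Γ : Matrix (Fin m) (Fin m) ℝ) (hΓ : Γ.IsSymm)
    (B : Matrix (Fin d) (Fin d) ℝ) (hB : B = γ • 1 + U * Γ * Uᵀ)
    (s y : Fin d → ℝ) (hys : y ⬝ᵥ s ≠ 0)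
    (ρ : ℝ) (hρ : ρ = (y ⬝ᵥ s)⁻¹)
    (V : Matrix (Fin d) (Fin d) ℝ) (hV : V = 1 - ρ • vecMulVec s y)
    (p : Fin m → ℝ) (hp : p = Γ *ᵥ (Uᵀ *ᵥ s))
    (τ : ℝ) (hτ : τ = s ⬝ᵥ (U *ᵥ (Γ *ᵥ (Uᵀ *ᵥ s))))
    (δ : ℝ) (hδ : δ = τ + γ * (s ⬝ᵥ s))
    (W : Matrix (Fin d) (Fin 2) ℝ)
    (hW : W = Matrix.of fun i j => if j = 0 then s i else y i)
    (Uplus : Matrix (Fin d) (Fin m ⊕ Fin 2) ℝ) (hUplus : Uplus = fromCols U W)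
    (X : Matrix (Fin m) (Fin 2) ℝ)
    (hX : X = Matrix.of fun i j => if j = 0 then 0 else -ρ * p i)
    (Y : Matrix (Fin 2) (Fin 2) ℝ)
    (hY : Y = !![0, -γ * ρ; -γ * ρ, ρ * (1 + ρ * δ)])
    (Γplus : Matrix (Fin m ⊕ Fin 2) (Fin m ⊕ Fin 2) ℝ)
    (hΓplus : Γplus = fromBlocks Γ X Xᵀ Y) :
    Vᵀ * B * V + ρ • vecMulVec y y
      = γ • 1 + Uplus * Γplus * Uplusᵀ := by
  have hΓT : Γᵀ = Γ := hΓ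
  -- rewrite W, X, Y in terms of vecMulVec with ee0, ee1
  have hW' : W = vecMulVec s ee0 + vecMulVec y ee1 := by
    rw [hW]; ext i j
    fin_cases j <;> simp [Matrix.vecMulVec_apply, ee0, ee1]
  have hX' : X = (-ρ) • vecMulVec p ee1 := by
    rw [hX]; ext i j
    fin_cases j <;> simp [Matrix.vecMulVec_apply, ee1]
  have hY' : Y = (-(γ*ρ)) • vecMulVec ee0 ee1 + (-(γ*ρ)) • vecMulVec ee1 ee0
      + (ρ*(1+ρ*δ)) • vecMulVec ee1 ee1 := by
    rw [hY]; ext i j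
    fin_cases i <;> fin_cases j <;>
      simp [Matrix.vecMulVec_apply, ee0, ee1]
  -- key vector facts
  have hAs : (U * Γ * Uᵀ) *ᵥ s = U *ᵥ p := by
    rw [hp, ← Matrix.mulVec_mulVec, ← Matrix.mulVec_mulVec]
  have hsA : s ᵥ* (U * Γ * Uᵀ) = U *ᵥ p := by
    have hAT : (U * Γ * Uᵀ)ᵀ = U * Γ * Uᵀ := by
      simp [Matrix.transpose_mul, hΓT, Matrix.mul_assoc]
    rw [← Matrix.mulVec_transpose, hAT, hAs]
  have hτ' : s ⬝ᵥ (U *ᵥ p) = τ := by rw [hτ, hp]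
  have hpU : p ᵥ* Uᵀ = U *ᵥ p := Matrix.vecMul_transpose U p
  -- right hand side
  have hRHS : Uplus * Γplus * Uplusᵀ
      = U * Γ * Uᵀ + (-ρ) • vecMulVec y (U *ᵥ p) + (-ρ) • vecMulVec (U *ᵥ p) y
        + (-(γ*ρ)) • vecMulVec s y + (-(γ*ρ)) • vecMulVec y s
        + (ρ*(1+ρ*δ)) • vecMulVec y y := by
    rw [hUplus, hΓplus, transpose_fromCols, fromCols_mul_fromBlocks,
      fromCols_mul_fromRows, hW', hX', hY']
    simp only [Matrix.transpose_add, Matrix.transpose_smul, vv_transpose,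
      Matrix.add_mul, Matrix.mul_add, Matrix.smul_mul, Matrix.mul_smul,
      vv_mul_vv, vv_mul_mat, mat_mul_vv, ee00, ee01, ee10, ee11,
      one_smul, zero_smul, smul_zero, smul_smul, hpU,
      Matrix.mulVec_smul, vv_smul_left, vv_smul_right, vv_mulVec, vv_zero_left, vv_zero_right,
      Matrix.zero_mul, Matrix.mul_zero, Matrix.zero_mulVec, Matrix.mulVec_zero,
      zero_add, add_zero]
    module
  -- left hand side
  have hLHS : Vᵀ * B * V
      = γ • (1 : Matrix (Fin d) (Fin d) ℝ) + U * Γ * Uᵀ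
        + (-(γ*ρ)) • vecMulVec y s + (-ρ) • vecMulVec y (U *ᵥ p)
        + (-(γ*ρ)) • vecMulVec s y + (-ρ) • vecMulVec (U *ᵥ p) y
        + (ρ*ρ*(γ*(s ⬝ᵥ s)) + ρ*ρ*τ) • vecMulVec y y := by
    rw [hB, hV]
    simp only [Matrix.transpose_sub, Matrix.transpose_smul, Matrix.transpose_one,
      vv_transpose, Matrix.sub_mul, Matrix.mul_sub, Matrix.add_mul, Matrix.mul_add,
      Matrix.one_mul, Matrix.mul_one, Matrix.smul_mul, Matrix.mul_smul,
      vv_mul_vv, vv_mul_mat, mat_mul_vv, hsA, hAs, smul_smul, vv_mulVec,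
      Matrix.smul_mulVec, Matrix.one_mulVec, vv_smul_left, vv_smul_right,
      Matrix.smul_vecMul, Matrix.vecMul_one, Matrix.mulVec_smul, hτ',
      Matrix.smul_mul, Matrix.mul_smul]
    rw [dotProduct_comm (U *ᵥ p) s, hτ']
    module
  rw [hLHS, hRHS, hδ]
  module
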